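/- Let Q = ([0,1],&,1) with & a continuous t-norm and let A be a D(Q)-category. If {x_λ} is a forward Cauchy net in A, φ(x) = ⋁_λ ⋀_{μ≥λ} A(x,x_μ) is the weight generated by {x_λ} with type a = ⋁_λ ⋀_{μ≥λ} A(x_μ,x_μ), and ψ(y) = ⋁_λ ⋀_{μ≥λ} A(x_μ,y) is the generated coweight, then ψ∘φ ≤ A, i.e., (a → ψ(y)) & φ(x) ≤ A(x,y) for all x,y ∈ A₀. -/
import Mathlib


noncomputable def tres (f : ℝ → ℝ → ℝ) (x y : ℝ) : ℝ :=
  sSup {z | z ∈ Set.Icc (0:ℝ) 1 ∧ f x z ≤ y}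

def IsContTNorm (f : ℝ → ℝ → ℝ) : Prop :=
  (∀ a ∈ Set.Icc (0:ℝ) 1, ∀ b ∈ Set.Icc (0:ℝ) 1, f a b ∈ Set.Icc (0:ℝ) 1) ∧
  ContinuousOn (fun p : ℝ × ℝ => f p.1 p.2) (Set.Icc 0 1 ×ˢ Set.Icc 0 1) ∧
  (∀ a ∈ Set.Icc (0:ℝ) 1, ∀ b ∈ Set.Icc (0:ℝ) 1, f a b = f b a) ∧
  (∀ a ∈ Set.Icc (0:ℝ) 1, ∀ b ∈ Set.Icc (0:ℝ) 1, ∀ c ∈ Set.Icc (0:ℝ) 1,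
    f (f a b) c = f a (f b c)) ∧
  (∀ a ∈ Set.Icc (0:ℝ) 1, ∀ b ∈ Set.Icc (0:ℝ) 1, ∀ c ∈ Set.Icc (0:ℝ) 1,
    a ≤ b → f a c ≤ f b c) ∧
  (∀ a ∈ Set.Icc (0:ℝ) 1, f a 1 = a)

/-- A D(Q)-category (ordered fuzzy set) valued in `([0,1], f, 1)`. -/
def IsDCat {α : Type*} (f : ℝ → ℝ → ℝ) (A : α → α → ℝ) : Prop :=
  (∀ x y, A x y ∈ Set.Icc (0:ℝ) 1) ∧
  (∀ x y, A x y ≤ min (A x x) (A y y)) ∧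
  (∀ x y z, f (tres f (A y y) (A y z)) (A x y) ≤ A x z)

/-- A net is forward Cauchy if `lim_{ν ≥ μ} A(x_μ, x_ν)` exists. -/
def FwdCauchy {α : Type*} {Λ : Type*} [Preorder Λ] (A : α → α → ℝ) (x : Λ → α) : Prop :=
  ∃ L : ℝ, Filter.Tendsto (fun q : Λ × Λ => A (x q.1) (x q.2))
    (Filter.atTop ⊓ Filter.principal {q : Λ × Λ | q.1 ≤ q.2}) (nhds L)

/-- A net is biCauchy if `lim_{μ,ν} A(x_μ, x_ν)` exists. -/
def BiCauchy {α : Type*} {Λ : Type*} [Preorder Λ] (A : α → α → ℝ) (x : Λ → α) : Prop :=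
  ∃ L : ℝ, Filter.Tendsto (fun q : Λ × Λ => A (x q.1) (x q.2)) Filter.atTop (nhds L)

/-- The type `⋁_λ ⋀_{μ ≥ λ} A(x_μ, x_μ)` of a net. -/
noncomputable def genType {α : Type*} {Λ : Type*} [Preorder Λ]
    (A : α → α → ℝ) (x : Λ → α) : ℝ :=
  ⨆ l : Λ, ⨅ σ : {σ : Λ // l ≤ σ}, A (x σ.1) (x σ.1)

/-- The weight `⋁_λ ⋀_{μ ≥ λ} A(−, x_μ)` generated by a net. -/
noncomputable def genWeight {α : Type*} {Λ : Type*} [Preorder Λ]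
    (A : α → α → ℝ) (x : Λ → α) : α → ℝ :=
  fun u => ⨆ l : Λ, ⨅ σ : {σ : Λ // l ≤ σ}, A u (x σ.1)

/-- The coweight `⋁_λ ⋀_{μ ≥ λ} A(x_μ, −)` generated by a net. -/
noncomputable def genCoweight {α : Type*} {Λ : Type*} [Preorder Λ]
    (A : α → α → ℝ) (x : Λ → α) : α → ℝ :=
  fun v => ⨆ l : Λ, ⨅ σ : {σ : Λ // l ≤ σ}, A (x σ.1) v

/-- `s` is a Yoneda limit of the net `x`. -/
noncomputable def YonedaLim {α : Type*} {Λ : Type*} [Preorder Λ]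
    (A : α → α → ℝ) (x : Λ → α) (s : α) : Prop :=
  A s s = genType A x ∧ ∀ y, A s y = genCoweight A x y

namespace Stmt10Aux

open Set

variable {f : ℝ → ℝ → ℝ}

lemma mem01 (ht : IsContTNorm f) {a b : ℝ} (ha : a ∈ Icc (0:ℝ) 1) (hb : b ∈ Icc (0:ℝ) 1) :
    f a b ∈ Icc (0:ℝ) 1 := ht.1 a ha b hb

lemma comm (ht : IsContTNorm f) {a b : ℝ} (ha : a ∈ Icc (0:ℝ) 1) (hb : b ∈ Icc (0:ℝ) 1) :
    f a b = f b a := ht.2.2.1 a ha b hb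

lemma assoc (ht : IsContTNorm f) {a b c : ℝ} (ha : a ∈ Icc (0:ℝ) 1) (hb : b ∈ Icc (0:ℝ) 1)
    (hc : c ∈ Icc (0:ℝ) 1) : f (f a b) c = f a (f b c) := ht.2.2.2.1 a ha b hb c hc

lemma mono1 (ht : IsContTNorm f) {a b c : ℝ} (ha : a ∈ Icc (0:ℝ) 1) (hb : b ∈ Icc (0:ℝ) 1)
    (hc : c ∈ Icc (0:ℝ) 1) (hab : a ≤ b) : f a c ≤ f b c := ht.2.2.2.2.1 a ha b hb c hc hab

lemma unit (ht : IsContTNorm f) {a : ℝ} (ha : a ∈ Icc (0:ℝ) 1) : f a 1 = a :=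
  ht.2.2.2.2.2 a ha

lemma one_mem : (1:ℝ) ∈ Icc (0:ℝ) 1 := ⟨zero_le_one, le_refl 1⟩
lemma zero_mem : (0:ℝ) ∈ Icc (0:ℝ) 1 := ⟨le_refl 0, zero_le_one⟩

lemma unit' (ht : IsContTNorm f) {a : ℝ} (ha : a ∈ Icc (0:ℝ) 1) : f 1 a = a := by
  rw [comm ht one_mem ha]; exact unit ht ha

lemma zero (ht : IsContTNorm f) {a : ℝ} (ha : a ∈ Icc (0:ℝ) 1) : f a 0 = 0 := by
  have h1 : f a 0 ≤ f 1 0 := mono1 ht ha one_mem zero_mem ha.2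
  rw [unit' ht zero_mem] at h1
  exact le_antisymm h1 (mem01 ht ha zero_mem).1

lemma mono2 (ht : IsContTNorm f) {a b c : ℝ} (ha : a ∈ Icc (0:ℝ) 1) (hb : b ∈ Icc (0:ℝ) 1)
    (hc : c ∈ Icc (0:ℝ) 1) (hbc : b ≤ c) : f a b ≤ f a c := by
  rw [comm ht ha hb, comm ht ha hc]; exact mono1 ht hb hc ha hbc

lemma contOn (ht : IsContTNorm f) {b : ℝ} (hb : b ∈ Icc (0:ℝ) 1) :
    ContinuousOn (fun w => f b w) (Icc (0:ℝ) 1) := by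
  have : (fun w => f b w) = (fun p : ℝ × ℝ => f p.1 p.2) ∘ (fun w => (b, w)) := rfl
  rw [this]
  exact ht.2.1.comp (Continuous.continuousOn (by continuity)) (fun w hw => ⟨hb, hw⟩)

/-- divisibility -/
lemma divis (ht : IsContTNorm f) {b s : ℝ} (hb : b ∈ Icc (0:ℝ) 1) (hs0 : 0 ≤ s)
    (hsb : s ≤ b) : ∃ w ∈ Icc (0:ℝ) 1, f b w = s := by
  have hIV := intermediate_value_Icc (zero_le_one) (contOn ht hb)
  have hmem : s ∈ Icc (f b 0) (f b 1) := by
    rw [zero ht hb, unit ht hb]; exact ⟨hs0, hsb⟩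
  obtain ⟨w, hw, hfw⟩ := hIV hmem
  exact ⟨w, hw, hfw⟩

lemma tres_set_nonempty (ht : IsContTNorm f) {b c : ℝ} (hb : b ∈ Icc (0:ℝ) 1) (hc : 0 ≤ c) :
    (0:ℝ) ∈ {z | z ∈ Icc (0:ℝ) 1 ∧ f b z ≤ c} := ⟨zero_mem, by rw [zero ht hb]; exact hc⟩

lemma tres_set_bdd {b c : ℝ} : BddAbove {z | z ∈ Icc (0:ℝ) 1 ∧ f b z ≤ c} :=
  ⟨1, fun z hz => hz.1.2⟩

lemma tres_mem (ht : IsContTNorm f) {b c : ℝ} (hb : b ∈ Icc (0:ℝ) 1) (hc : 0 ≤ c) :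
    tres f b c ∈ Icc (0:ℝ) 1 :=
  ⟨le_csSup tres_set_bdd (tres_set_nonempty ht hb hc),
   csSup_le ⟨0, tres_set_nonempty ht hb hc⟩ (fun z hz => hz.1.2)⟩

lemma tres_set_closed (ht : IsContTNorm f) {b c : ℝ} (hb : b ∈ Icc (0:ℝ) 1) :
    IsClosed {z | z ∈ Icc (0:ℝ) 1 ∧ f b z ≤ c} := by
  have : {z | z ∈ Icc (0:ℝ) 1 ∧ f b z ≤ c} = Icc (0:ℝ) 1 ∩ (fun w => f b w) ⁻¹' Iic c := rfl
  rw [this]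
  exact ContinuousOn.preimage_isClosed_of_isClosed (contOn ht hb) isClosed_Icc isClosed_Iic

lemma tres_apply (ht : IsContTNorm f) {b c : ℝ} (hb : b ∈ Icc (0:ℝ) 1) (hc : 0 ≤ c) :
    f b (tres f b c) ≤ c :=
  ((tres_set_closed ht hb).csSup_mem ⟨0, tres_set_nonempty ht hb hc⟩ tres_set_bdd).2

lemma tres_eq_min (ht : IsContTNorm f) {b c : ℝ} (hb : b ∈ Icc (0:ℝ) 1)
    (hc : c ∈ Icc (0:ℝ) 1) : f b (tres f b c) = min b c := by
  have hr := tres_mem ht hb hc.1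
  refine le_antisymm (le_min ?_ (tres_apply ht hb hc.1)) ?_
  · have := mono2 ht hb hr one_mem hr.2
    rwa [unit ht hb] at this
  · obtain ⟨w, hw, hfw⟩ := divis ht hb (le_min hb.1 hc.1 : 0 ≤ min b c) (min_le_left _ _)
    have hwS : w ∈ {z | z ∈ Icc (0:ℝ) 1 ∧ f b z ≤ c} := ⟨hw, by rw [hfw]; exact min_le_right _ _⟩
    have hwr : w ≤ tres f b c := le_csSup tres_set_bdd hwS
    calc min b c = f b w := hfw.symm
    _ ≤ f b (tres f b c) := mono2 ht hb hw hr hwr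

lemma unifcont (ht : IsContTNorm f) {ε : ℝ} (hε : 0 < ε) :
    ∃ δ > 0, ∀ z ∈ Icc (0:ℝ) 1, ∀ z' ∈ Icc (0:ℝ) 1, ∀ w ∈ Icc (0:ℝ) 1,
      |z - z'| < δ → |f z w - f z' w| ≤ ε := by
  have hcpt : IsCompact (Icc (0:ℝ) 1 ×ˢ Icc (0:ℝ) 1) := isCompact_Icc.prod isCompact_Icc
  have hu := hcpt.uniformContinuousOn_of_continuous ht.2.1
  rw [Metric.uniformContinuousOn_iff] at hu
  obtain ⟨δ, hδ, H⟩ := hu ε hε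
  refine ⟨δ, hδ, fun z hz z' hz' w hw hlt => ?_⟩
  have := H (z, w) ⟨hz, hw⟩ (z', w) ⟨hz', hw⟩ ?_
  · rw [Real.dist_eq] at this; exact le_of_lt this
  · rw [Prod.dist_eq, Real.dist_eq, Real.dist_eq, sub_self, abs_zero]
    rw [max_eq_left (abs_nonneg _)]; exact hlt

end Stmt10Aux

namespace Stmt10Aux

open Set

lemma bddBelow_rng {ι : Sort*} {g : ι → ℝ} (h : ∀ i, 0 ≤ g i) : BddBelow (Set.range g) := by
  refine ⟨0, ?_⟩; rintro y ⟨i, rfl⟩; exact h i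

lemma bddAbove_rng {ι : Sort*} {g : ι → ℝ} (h : ∀ i, g i ≤ 1) : BddAbove (Set.range g) := by
  refine ⟨1, ?_⟩; rintro y ⟨i, rfl⟩; exact h i

variable {Λ : Type*} [Nonempty Λ] [Preorder Λ]

lemma inner_mem {g : Λ → ℝ} (hg : ∀ σ, g σ ∈ Icc (0:ℝ) 1) (l : Λ) :
    (⨅ σ : {σ : Λ // l ≤ σ}, g σ.1) ∈ Icc (0:ℝ) 1 := by
  haveI : Nonempty {σ : Λ // l ≤ σ} := ⟨⟨l, le_refl l⟩⟩
  constructor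
  · exact le_ciInf fun σ => (hg σ.1).1
  · exact ciInf_le_of_le (bddBelow_rng fun σ => (hg σ.1).1) ⟨l, le_refl l⟩ (hg l).2

lemma supInf_mem {g : Λ → ℝ} (hg : ∀ σ, g σ ∈ Icc (0:ℝ) 1) :
    (⨆ l : Λ, ⨅ σ : {σ : Λ // l ≤ σ}, g σ.1) ∈ Icc (0:ℝ) 1 := by
  constructor
  · exact le_ciSup_of_le (bddAbove_rng fun l => (inner_mem hg l).2)
      (Classical.arbitrary Λ) (inner_mem hg _).1
  · exact ciSup_le fun l => (inner_mem hg l).2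

lemma inner_le_supInf {g : Λ → ℝ} (hg : ∀ σ, g σ ∈ Icc (0:ℝ) 1) (l : Λ) :
    (⨅ σ : {σ : Λ // l ≤ σ}, g σ.1) ≤ ⨆ l : Λ, ⨅ σ : {σ : Λ // l ≤ σ}, g σ.1 :=
  le_ciSup (bddAbove_rng fun l => (inner_mem hg l).2) l

/-- Core pointwise estimate. -/
lemma core {f : ℝ → ℝ → ℝ} (ht : IsContTNorm f) {aT ψ b c s D ε2 δ1 δ2 : ℝ}
    (haT : aT ∈ Icc (0:ℝ) 1) (hψ : ψ ∈ Icc (0:ℝ) 1) (hb : b ∈ Icc (0:ℝ) 1)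
    (hc : c ∈ Icc (0:ℝ) 1) (hs : s ∈ Icc (0:ℝ) 1)
    (hδ1 : 0 < δ1) (hδ2 : 0 < δ2)
    (H1 : ∀ z ∈ Icc (0:ℝ) 1, ∀ z' ∈ Icc (0:ℝ) 1, ∀ w ∈ Icc (0:ℝ) 1,
      |z - z'| < δ1 → |f z w - f z' w| ≤ δ2/4)
    (H2 : ∀ z ∈ Icc (0:ℝ) 1, ∀ z' ∈ Icc (0:ℝ) 1, ∀ w ∈ Icc (0:ℝ) 1,
      |z - z'| < δ2 → |f z w - f z' w| ≤ ε2)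
    (hbA : b < aT + δ1/2) (hcψ : ψ - δ2/4 < c) (hsb : s ≤ b)
    (hD : f (tres f b c) s ≤ D) :
    f (tres f aT ψ) s ≤ D + ε2 := by
  set t := tres f aT ψ with htdef
  have ht01 : t ∈ Icc (0:ℝ) 1 := tres_mem ht haT hψ.1
  have hat : f aT t ≤ ψ := tres_apply ht haT hψ.1
  set r := tres f b c with hrdef
  have hr01 : r ∈ Icc (0:ℝ) 1 := tres_mem ht hb hc.1
  have hbr : f b r = min b c := tres_eq_min ht hb hc
  -- step 1 : f b t ≤ c + δ2/2
  have hmin1 : min (aT + δ1/2) 1 ∈ Icc (0:ℝ) 1 :=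
    ⟨le_min (by linarith [haT.1]) zero_le_one, min_le_right _ _⟩
  have hstep1 : f b t ≤ f (min (aT + δ1/2) 1) t :=
    mono1 ht hb hmin1 ht01 (le_min hbA.le hb.2)
  have hstep2 : |f (min (aT + δ1/2) 1) t - f aT t| ≤ δ2/4 := by
    refine H1 _ hmin1 _ haT _ ht01 ?_
    have h1 : aT ≤ min (aT + δ1/2) 1 := le_min (by linarith) haT.2
    have h2 : min (aT + δ1/2) 1 ≤ aT + δ1/2 := min_le_left _ _
    rw [abs_sub_lt_iff]; constructor <;> linarith
  have hbt_c : f b t ≤ c + δ2/2 := by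
    have := abs_le.mp hstep2
    linarith
  have hbt_b : f b t ≤ b := by
    have := mono2 ht hb ht01 one_mem ht01.2
    rwa [unit ht hb] at this
  have hbt01 : f b t ∈ Icc (0:ℝ) 1 := mem01 ht hb ht01
  -- divisibility witness
  obtain ⟨w, hw01, hbw⟩ := divis ht hb hs.1 hsb
  have hkey : f t s = f (f b t) w := by
    rw [← hbw, ← assoc ht ht01 hb hw01, comm ht ht01 hb]
  set m := min b c with hmdef
  have hm01 : m ∈ Icc (0:ℝ) 1 := ⟨le_min hb.1 hc.1, (min_le_left _ _).trans hb.2⟩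
  have hmin2 : min (m + δ2/2) 1 ∈ Icc (0:ℝ) 1 :=
    ⟨le_min (by linarith [hm01.1]) zero_le_one, min_le_right _ _⟩
  have hbt_le : f b t ≤ min (m + δ2/2) 1 := by
    refine le_min ?_ hbt01.2
    rcases le_total b c with h | h
    · have : m = b := min_eq_left h
      rw [this]; linarith
    · have : m = c := min_eq_right h
      rw [this]; linarith
  have hstep3 : f (f b t) w ≤ f (min (m + δ2/2) 1) w := mono1 ht hbt01 hmin2 hw01 hbt_le
  have hstep4 : |f (min (m + δ2/2) 1) w - f m w| ≤ ε2 := by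
    refine H2 _ hmin2 _ hm01 _ hw01 ?_
    have h1 : m ≤ min (m + δ2/2) 1 := le_min (by linarith) hm01.2
    have h2 : min (m + δ2/2) 1 ≤ m + δ2/2 := min_le_left _ _
    rw [abs_sub_lt_iff]; constructor <;> linarith
  have hmw : f m w = f r s := by
    rw [← hbr, comm ht hb hr01, assoc ht hr01 hb hw01, hbw]
  have := abs_le.mp hstep4
  calc f t s = f (f b t) w := hkey
  _ ≤ f (min (m + δ2/2) 1) w := hstep3
  _ ≤ f m w + ε2 := by linarith
  _ = f r s + ε2 := by rw [hmw]
  _ ≤ D + ε2 := by linarith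

end Stmt10Aux

open Stmt10Aux

/-- for a forward Cauchy net `x` with generated weight `φ`, coweight `ψ`
and type `a`, we have `ψ ∘ φ ≤ A`, i.e. `(a → ψ(y)) & φ(x) ≤ A(x,y)`. -/
theorem stmt10 (f : ℝ → ℝ → ℝ) (ht : IsContTNorm f)
    {α : Type*} (A : α → α → ℝ) (hA : IsDCat f A)
    {Λ : Type*} [Nonempty Λ] [SemilatticeSup Λ] (x : Λ → α)
    (hfc : FwdCauchy A x) :
    ∀ u v : α, f (tres f (genType A x) (genCoweight A x v)) (genWeight A x u) ≤ A u v := by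
  intro u v
  obtain ⟨hA1, hA2, hA3⟩ := hA
  simp only [genType, genCoweight, genWeight]
  set aT := ⨆ l : Λ, ⨅ σ : {σ : Λ // l ≤ σ}, A (x σ.1) (x σ.1) with haTdef
  set ψ := ⨆ l : Λ, ⨅ σ : {σ : Λ // l ≤ σ}, A (x σ.1) v with hψdef
  set φ := ⨆ l : Λ, ⨅ σ : {σ : Λ // l ≤ σ}, A u (x σ.1) with hφdef
  have haT01 : aT ∈ Set.Icc (0:ℝ) 1 := by
    rw [haTdef]; exact supInf_mem (g := fun m => A (x m) (x m)) (fun σ => hA1 _ _)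
  have hψ01 : ψ ∈ Set.Icc (0:ℝ) 1 := by
    rw [hψdef]; exact supInf_mem (g := fun m => A (x m) v) (fun σ => hA1 _ _)
  have hφ01 : φ ∈ Set.Icc (0:ℝ) 1 := by
    rw [hφdef]; exact supInf_mem (g := fun m => A u (x m)) (fun σ => hA1 _ _)
  set t := tres f aT ψ with htdef
  have ht01 : t ∈ Set.Icc (0:ℝ) 1 := tres_mem ht haT01 hψ01.1
  refine le_of_forall_pos_le_add (fun ε hε => ?_)
  obtain ⟨δ2, hδ2, H2⟩ := unifcont ht (show (0:ℝ) < ε/2 by linarith)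
  obtain ⟨δ1, hδ1, H1⟩ := unifcont ht (show (0:ℝ) < δ2/4 by linarith)
  obtain ⟨l1, hl1⟩ : ∃ l : Λ, ψ - δ2/4 < ⨅ σ : {σ : Λ // l ≤ σ}, A (x σ.1) v := by
    apply exists_lt_of_lt_ciSup
    rw [← hψdef]; linarith
  obtain ⟨l2, hl2⟩ : ∃ l : Λ, φ - δ2/2 < ⨅ σ : {σ : Λ // l ≤ σ}, A u (x σ.1) := by
    apply exists_lt_of_lt_ciSup
    rw [← hφdef]; linarith
  haveI : Nonempty {σ : Λ // (l1 ⊔ l2) ≤ σ} := ⟨⟨l1 ⊔ l2, le_refl _⟩⟩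
  obtain ⟨⟨μ, hμ⟩, hμlt⟩ : ∃ σ : {σ : Λ // (l1 ⊔ l2) ≤ σ}, A (x σ.1) (x σ.1) < aT + δ1/2 := by
    apply exists_lt_of_ciInf_lt
    have hle : (⨅ σ : {σ : Λ // (l1 ⊔ l2) ≤ σ}, A (x σ.1) (x σ.1)) ≤ aT := by
      rw [haTdef]; exact inner_le_supInf (g := fun m => A (x m) (x m)) (fun σ => hA1 _ _) _
    linarith
  have hb01 := hA1 (x μ) (x μ)
  have hc01 := hA1 (x μ) v
  have hs01 := hA1 u (x μ)
  have hsb : A u (x μ) ≤ A (x μ) (x μ) := (hA2 u (x μ)).trans (min_le_right _ _)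
  have hcψ : ψ - δ2/4 < A (x μ) v := by
    refine lt_of_lt_of_le hl1 ?_
    exact ciInf_le (bddBelow_rng fun σ => (hA1 _ _).1) (⟨μ, le_trans le_sup_left hμ⟩ : {σ : Λ // l1 ≤ σ})
  have hkey : f t (A u (x μ)) ≤ A u v + ε/2 :=
    core ht haT01 hψ01 hb01 hc01 hs01 hδ1 hδ2 H1 H2 hμlt hcψ hsb (hA3 u (x μ) v)
  have hθ01 : (⨅ σ : {σ : Λ // l2 ≤ σ}, A u (x σ.1)) ∈ Set.Icc (0:ℝ) 1 :=
    inner_mem (g := fun m => A u (x m)) (fun σ => hA1 _ _) _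
  have hθs : (⨅ σ : {σ : Λ // l2 ≤ σ}, A u (x σ.1)) ≤ A u (x μ) :=
    ciInf_le (bddBelow_rng fun σ => (hA1 _ _).1) (⟨μ, le_trans le_sup_right hμ⟩ : {σ : Λ // l2 ≤ σ})
  have hθφ : (⨅ σ : {σ : Λ // l2 ≤ σ}, A u (x σ.1)) ≤ φ := by
    rw [hφdef]; exact inner_le_supInf (g := fun m => A u (x m)) (fun σ => hA1 _ _) _
  have h5 : f t (⨅ σ : {σ : Λ // l2 ≤ σ}, A u (x σ.1)) ≤ f t (A u (x μ)) :=
    mono2 ht ht01 hθ01 hs01 hθs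
  have h6 : |f φ t - f (⨅ σ : {σ : Λ // l2 ≤ σ}, A u (x σ.1)) t| ≤ ε/2 := by
    refine H2 _ hφ01 _ hθ01 _ ht01 ?_
    rw [abs_sub_lt_iff]; constructor <;> linarith
  have h7 : f t φ = f φ t := comm ht ht01 hφ01
  have h8 : f t (⨅ σ : {σ : Λ // l2 ≤ σ}, A u (x σ.1))
      = f (⨅ σ : {σ : Λ // l2 ≤ σ}, A u (x σ.1)) t := comm ht ht01 hθ01
  have h9 := abs_le.mp h6
  rw [h7]
  linarith [h5, hkey, h9.1, h9.2, h8]
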